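/- arXiv:math/0009141 — 2 statements merged into one kernel-verified Lean document; each statement's English description precedes it below -/
import Mathlib

section
/- Let k be a field, A a k-algebra, and R ∈ A⊗A a unitary invertible solution of the pentagon equation. Then the subalgebra A_R of A generated by P = R_(l) and H = R_(r) is spanned over k by the products {b·a : b ∈ H, a ∈ P}; in particular A_R is finite-dimensional and dim_k(A_R) ≤ l(R)². -/
open TensorProduct

set_option maxHeartbeats 1000000
set_option synthInstance.maxHeartbeats 200000

namespace PentagonPaper

section Pentagon

variable (k : Type*) [Field k] (A : Type*) [Ring A] [Algebra k A]

/-- `x ⊗ y ↦ x ⊗ y ⊗ 1` -/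
noncomputable def leg12 : A ⊗[k] A →ₐ[k] A ⊗[k] (A ⊗[k] A) :=
  Algebra.TensorProduct.map (AlgHom.id k A) Algebra.TensorProduct.includeLeft

/-- `x ⊗ y ↦ x ⊗ 1 ⊗ y` -/
noncomputable def leg13 : A ⊗[k] A →ₐ[k] A ⊗[k] (A ⊗[k] A) :=
  Algebra.TensorProduct.map (AlgHom.id k A) Algebra.TensorProduct.includeRight

/-- `x ⊗ y ↦ 1 ⊗ x ⊗ y` -/
noncomputable def leg23 : A ⊗[k] A →ₐ[k] A ⊗[k] (A ⊗[k] A) :=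
  Algebra.TensorProduct.includeRight

variable {k A}

/-- The pentagon equation `R¹²R¹³R²³ = R²³R¹²`. -/
def IsPentagon (R : A ⊗[k] A) : Prop :=
  leg12 k A R * leg13 k A R * leg23 k A R = leg23 k A R * leg12 k A R

/-- `φ ↦ (id ⊗ φ)(R)`, i.e. the map sending a functional to the corresponding
left coefficient of `R`. -/
noncomputable def lCoefMap (R : A ⊗[k] A) : Module.Dual k A →ₗ[k] A :=
  (TensorProduct.rid k A).toLinearMap ∘ₗ LinearMap.applyₗ R ∘ₗ LinearMap.lTensorHom A

/-- `φ ↦ (φ ⊗ id)(R)`, i.e. the map sending a functional to the corresponding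
right coefficient of `R`. -/
noncomputable def rCoefMap (R : A ⊗[k] A) : Module.Dual k A →ₗ[k] A :=
  (TensorProduct.lid k A).toLinearMap ∘ₗ LinearMap.applyₗ R ∘ₗ LinearMap.rTensorHom A

/-- The space `R_(l)` of left coefficients of `R`. -/
noncomputable def lCoefs (R : A ⊗[k] A) : Submodule k A := LinearMap.range (lCoefMap R)

/-- The space `R_(r)` of right coefficients of `R`. -/
noncomputable def rCoefs (R : A ⊗[k] A) : Submodule k A := LinearMap.range (rCoefMap R)

/-- `R` is unitary if `1 ∈ R_(l) ∩ R_(r)`. -/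
def IsUnitary (R : A ⊗[k] A) : Prop := (1 : A) ∈ lCoefs R ∧ (1 : A) ∈ rCoefs R

/-- The length `l(R)`: the minimal `m` such that `R = ∑_{i=1}^m aᵢ ⊗ bᵢ`. -/
noncomputable def length (R : A ⊗[k] A) : ℕ :=
  sInf {m : ℕ | ∃ a b : Fin m → A, R = ∑ i, a i ⊗ₜ[k] b i}

/-- The left `R`-coinvariants `A^{R,l} = {a | R(a ⊗ 1) = a ⊗ 1}`. -/
noncomputable def lCoinv (R : A ⊗[k] A) : Submodule k A where
  carrier := {a : A | R * (a ⊗ₜ[k] (1 : A)) = a ⊗ₜ[k] (1 : A)}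
  add_mem' := by
    intro a b ha hb
    simp only [Set.mem_setOf_eq, TensorProduct.add_tmul, mul_add] at *
    rw [ha, hb]
  zero_mem' := by simp
  smul_mem' := by
    intro c a ha
    simp only [Set.mem_setOf_eq] at *
    rw [← TensorProduct.smul_tmul', mul_smul_comm, ha]

/-- The right `R`-coinvariants `A^{R,r} = {a | (1 ⊗ a)R = 1 ⊗ a}`. -/
noncomputable def rCoinv (R : A ⊗[k] A) : Submodule k A where
  carrier := {a : A | ((1 : A) ⊗ₜ[k] a) * R = (1 : A) ⊗ₜ[k] a}
  add_mem' := by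
    intro a b ha hb
    simp only [Set.mem_setOf_eq, TensorProduct.tmul_add, add_mul] at *
    rw [ha, hb]
  zero_mem' := by simp
  smul_mem' := by
    intro c a ha
    simp only [Set.mem_setOf_eq, TensorProduct.tmul_smul, smul_mul_assoc] at *
    rw [ha]

/-- The comultiplication `Δ_r : a ↦ R⁻¹(1 ⊗ a)R` on `A`. -/
noncomputable def deltaR (R : A ⊗[k] A) : A →ₗ[k] A ⊗[k] A where
  toFun a := Ring.inverse R * ((1 : A) ⊗ₜ[k] a) * R
  map_add' a b := by simp [TensorProduct.tmul_add, mul_add, add_mul]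
  map_smul' c a := by simp [TensorProduct.tmul_smul, mul_smul_comm, smul_mul_assoc]

/-- The comultiplication `Δ_l : a ↦ R(a ⊗ 1)R⁻¹` on `A`. -/
noncomputable def deltaL (R : A ⊗[k] A) : A →ₗ[k] A ⊗[k] A where
  toFun a := R * (a ⊗ₜ[k] (1 : A)) * Ring.inverse R
  map_add' a b := by simp [TensorProduct.add_tmul, mul_add, add_mul]
  map_smul' c a := by
    simp only [RingHom.id_apply]
    rw [← TensorProduct.smul_tmul', mul_smul_comm, smul_mul_assoc]

end Pentagon


section Aux

variable {k : Type*} [Field k] {A : Type*} [Ring A] [Algebra k A]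

lemma lCoefMap_sum {n : ℕ} (x y : Fin n → A) (φ : Module.Dual k A) :
    lCoefMap (∑ i, x i ⊗ₜ[k] y i) φ = ∑ i, φ (y i) • x i := by
  simp [lCoefMap, LinearMap.lTensorHom, TensorProduct.smul_tmul']

lemma rCoefMap_sum {n : ℕ} (x y : Fin n → A) (φ : Module.Dual k A) :
    rCoefMap (∑ i, x i ⊗ₜ[k] y i) φ = ∑ i, φ (x i) • y i := by
  simp [rCoefMap, LinearMap.rTensorHom, TensorProduct.smul_tmul']

lemma exists_fin_expansion (R : A ⊗[k] A) :
    ∃ (n : ℕ) (x y : Fin n → A), R = ∑ i, x i ⊗ₜ[k] y i := by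
  obtain ⟨S, hS⟩ := TensorProduct.exists_finset R
  refine ⟨S.card, fun i => (S.equivFin.symm i : A × A).1, fun i => (S.equivFin.symm i : A × A).2, ?_⟩
  rw [hS, ← Finset.sum_coe_sort S (fun p : A × A => p.1 ⊗ₜ[k] p.2),
    ← Equiv.sum_comp S.equivFin.symm (fun p : S => (p : A × A).1 ⊗ₜ[k] (p : A × A).2)]

lemma exists_dual {n : ℕ} {f : Fin n → A} (hf : LinearIndependent k f) :
    ∃ ψ : Fin n → Module.Dual k A, ∀ i j, ψ i (f j) = if j = i then (1:k) else 0 := by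
  refine ⟨fun i => (LinearMap.exists_extend ((Module.Basis.span hf).coord i)).choose, fun i j => ?_⟩
  have h := (LinearMap.exists_extend ((Module.Basis.span hf).coord i)).choose_spec
  have hj : f j = (Submodule.span k (Set.range f)).subtype (Module.Basis.span hf j) :=
    (congrArg Subtype.val (Module.Basis.span_apply hf j)).symm
  rw [hj, ← LinearMap.comp_apply, h, Module.Basis.coord_apply, Module.Basis.repr_self]
  simp [Finsupp.single_apply]

lemma indep_right_mem {n : ℕ} {R : A ⊗[k] A} {f e : Fin n → A} (he : LinearIndependent k e)
    (hR : R = ∑ i, f i ⊗ₜ[k] e i) : ∀ j, f j ∈ lCoefs R := by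
  obtain ⟨ψ, hψ⟩ := exists_dual he
  intro j
  refine ⟨ψ j, ?_⟩
  rw [hR, lCoefMap_sum]
  simp [hψ]

lemma indep_left_mem {n : ℕ} {R : A ⊗[k] A} {e g : Fin n → A} (he : LinearIndependent k e)
    (hR : R = ∑ i, e i ⊗ₜ[k] g i) : ∀ j, g j ∈ rCoefs R := by
  obtain ⟨ψ, hψ⟩ := exists_dual he
  intro j
  refine ⟨ψ j, ?_⟩
  rw [hR, rCoefMap_sum]
  simp [hψ]

lemma reduce_right {N : ℕ} (x y : Fin N → A) :
    ∃ (m : ℕ) (x' e : Fin m → A), LinearIndependent k e ∧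
      ∑ i, x i ⊗ₜ[k] y i = ∑ j, x' j ⊗ₜ[k] e j := by
  set W := Submodule.span k (Set.range y) with hW
  have : FiniteDimensional k W := by
    apply FiniteDimensional.span_of_finite; exact Set.finite_range y
  set B := Module.finBasis k W with hB
  have hmem : ∀ i, y i ∈ W := fun i => Submodule.subset_span (Set.mem_range_self i)
  refine ⟨Module.finrank k W, fun j => ∑ i, B.repr ⟨y i, hmem i⟩ j • x i, fun j => (B j : A),
    B.linearIndependent.map' W.subtype W.ker_subtype, ?_⟩
  have hy : ∀ i, y i = ∑ j, B.repr ⟨y i, hmem i⟩ j • (B j : A) := by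
    intro i
    have := B.sum_repr ⟨y i, hmem i⟩
    calc y i = ((⟨y i, hmem i⟩ : W) : A) := rfl
      _ = ((∑ j, B.repr ⟨y i, hmem i⟩ j • B j : W) : A) := by rw [this]
      _ = ∑ j, B.repr ⟨y i, hmem i⟩ j • (B j : A) := by push_cast; rfl
  calc ∑ i, x i ⊗ₜ[k] y i
      = ∑ i, ∑ j, x i ⊗ₜ[k] (B.repr ⟨y i, hmem i⟩ j • (B j : A)) := by
        refine Finset.sum_congr rfl fun i _ => ?_
        conv_lhs => rw [hy i]
        rw [TensorProduct.tmul_sum]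
    _ = ∑ j, (∑ i, B.repr ⟨y i, hmem i⟩ j • x i) ⊗ₜ[k] (B j : A) := by
        rw [Finset.sum_comm]
        refine Finset.sum_congr rfl fun j _ => ?_
        rw [TensorProduct.sum_tmul]
        refine Finset.sum_congr rfl fun i _ => ?_
        rw [TensorProduct.tmul_smul, TensorProduct.smul_tmul']

lemma reduce_left {N : ℕ} (x y : Fin N → A) :
    ∃ (m : ℕ) (e y' : Fin m → A), LinearIndependent k e ∧
      (∀ j, e j ∈ Submodule.span k (Set.range x)) ∧
      ∑ i, x i ⊗ₜ[k] y i = ∑ j, e j ⊗ₜ[k] y' j := by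
  set W := Submodule.span k (Set.range x) with hW
  have : FiniteDimensional k W := by
    apply FiniteDimensional.span_of_finite; exact Set.finite_range x
  set B := Module.finBasis k W with hB
  have hmem : ∀ i, x i ∈ W := fun i => Submodule.subset_span (Set.mem_range_self i)
  refine ⟨Module.finrank k W, fun j => (B j : A), fun j => ∑ i, B.repr ⟨x i, hmem i⟩ j • y i,
    B.linearIndependent.map' W.subtype W.ker_subtype, fun j => (B j).2, ?_⟩
  have hx : ∀ i, x i = ∑ j, B.repr ⟨x i, hmem i⟩ j • (B j : A) := by
    intro i
    have := B.sum_repr ⟨x i, hmem i⟩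
    calc x i = ((⟨x i, hmem i⟩ : W) : A) := rfl
      _ = ((∑ j, B.repr ⟨x i, hmem i⟩ j • B j : W) : A) := by rw [this]
      _ = ∑ j, B.repr ⟨x i, hmem i⟩ j • (B j : A) := by push_cast; rfl
  calc ∑ i, x i ⊗ₜ[k] y i
      = ∑ i, ∑ j, (B.repr ⟨x i, hmem i⟩ j • (B j : A)) ⊗ₜ[k] y i := by
        refine Finset.sum_congr rfl fun i _ => ?_
        conv_lhs => rw [hx i]
        rw [TensorProduct.sum_tmul]
    _ = ∑ j, (B j : A) ⊗ₜ[k] (∑ i, B.repr ⟨x i, hmem i⟩ j • y i) := by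
        rw [Finset.sum_comm]
        refine Finset.sum_congr rfl fun j _ => ?_
        rw [TensorProduct.tmul_sum]
        refine Finset.sum_congr rfl fun i _ => ?_
        rw [TensorProduct.smul_tmul, TensorProduct.tmul_smul]

lemma exists_good_expansion (R : A ⊗[k] A) :
    ∃ (n : ℕ) (f g : Fin n → A), (∀ i, f i ∈ lCoefs R) ∧ (∀ i, g i ∈ rCoefs R) ∧
      R = ∑ i, f i ⊗ₜ[k] g i := by
  obtain ⟨N, x, y, hxy⟩ := exists_fin_expansion R
  obtain ⟨m, x', e, he, hR1⟩ := reduce_right (k := k) x y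
  have hx' : ∀ j, x' j ∈ lCoefs R := indep_right_mem he (hxy.trans hR1)
  obtain ⟨n, f, g, hf_ind, hf_span, hR2⟩ := reduce_left (k := k) x' e
  have hfP : ∀ i, f i ∈ lCoefs R := fun i =>
    Submodule.span_le.mpr (Set.range_subset_iff.mpr hx') (hf_span i)
  have hgH : ∀ i, g i ∈ rCoefs R :=
    indep_left_mem hf_ind ((hxy.trans hR1).trans hR2)
  exact ⟨n, f, g, hfP, hgH, (hxy.trans hR1).trans hR2⟩

end Aux

section Con

variable {k : Type*} [Field k] {A : Type*} [Ring A] [Algebra k A]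

/-- `x ⊗ y ⊗ z ↦ φ(x)ψ(y) • z` -/
noncomputable def con1 (φ ψ : Module.Dual k A) : A ⊗[k] (A ⊗[k] A) →ₗ[k] A :=
  (TensorProduct.lid k A).toLinearMap ∘ₗ
    TensorProduct.map φ ((TensorProduct.lid k A).toLinearMap ∘ₗ LinearMap.rTensor A ψ)

/-- `x ⊗ y ⊗ z ↦ φ(y)ψ(z) • x` -/
noncomputable def con2 (φ ψ : Module.Dual k A) : A ⊗[k] (A ⊗[k] A) →ₗ[k] A :=
  (TensorProduct.rid k A).toLinearMap ∘ₗ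
    LinearMap.lTensor A ((TensorProduct.lid k k).toLinearMap ∘ₗ TensorProduct.map φ ψ)

/-- `x ⊗ y ⊗ z ↦ φ(x)ψ(z) • y` -/
noncomputable def con3 (φ ψ : Module.Dual k A) : A ⊗[k] (A ⊗[k] A) →ₗ[k] A :=
  (TensorProduct.lid k A).toLinearMap ∘ₗ
    TensorProduct.map φ ((TensorProduct.rid k A).toLinearMap ∘ₗ LinearMap.lTensor A ψ)

@[simp] lemma con1_tmul (φ ψ : Module.Dual k A) (x y z : A) :
    con1 φ ψ (x ⊗ₜ[k] (y ⊗ₜ[k] z)) = (φ x * ψ y) • z := by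
  simp [con1, mul_smul]; rw [smul_comm]

@[simp] lemma con2_tmul (φ ψ : Module.Dual k A) (x y z : A) :
    con2 φ ψ (x ⊗ₜ[k] (y ⊗ₜ[k] z)) = (φ y * ψ z) • x := by
  simp [con2, mul_smul]

@[simp] lemma con3_tmul (φ ψ : Module.Dual k A) (x y z : A) :
    con3 φ ψ (x ⊗ₜ[k] (y ⊗ₜ[k] z)) = (φ x * ψ z) • y := by
  simp [con3, mul_smul]; rw [smul_comm]

@[simp] lemma leg12_tmul (x y : A) : leg12 k A (x ⊗ₜ[k] y) = x ⊗ₜ[k] (y ⊗ₜ[k] 1) := by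
  simp [leg12]

@[simp] lemma leg13_tmul (x y : A) : leg13 k A (x ⊗ₜ[k] y) = x ⊗ₜ[k] ((1:A) ⊗ₜ[k] y) := by
  simp [leg13]

@[simp] lemma leg23_tmul (x y : A) : leg23 k A (x ⊗ₜ[k] y) = (1:A) ⊗ₜ[k] (x ⊗ₜ[k] y) := by
  simp [leg23]

end Con

section Key

variable {k : Type*} [Field k] {A : Type*} [Ring A] [Algebra k A]

lemma rCoefs_mul_mem {R : A ⊗[k] A} (hinv : IsUnit R) (hpent : IsPentagon R)
    {b b' : A} (hb : b ∈ rCoefs R) (hb' : b' ∈ rCoefs R) : b * b' ∈ rCoefs R := by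
  obtain ⟨φ, rfl⟩ := hb
  obtain ⟨ψ, rfl⟩ := hb'
  obtain ⟨n, f, g, hf, hg, hR⟩ := exists_good_expansion R
  obtain ⟨m, c, d, hRinv⟩ := exists_fin_expansion (Ring.inverse R)
  have h1 : leg12 k A (Ring.inverse R) * leg12 k A R = 1 := by
    rw [← map_mul, Ring.inverse_mul_cancel R hinv, map_one]
  have key : leg13 k A R * leg23 k A R =
      leg12 k A (Ring.inverse R) * (leg23 k A R * leg12 k A R) := by
    calc leg13 k A R * leg23 k A R
        = (leg12 k A (Ring.inverse R) * leg12 k A R) * (leg13 k A R * leg23 k A R) := by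
          rw [h1, one_mul]
      _ = leg12 k A (Ring.inverse R) * (leg12 k A R * leg13 k A R * leg23 k A R) := by
          simp only [mul_assoc]
      _ = leg12 k A (Ring.inverse R) * (leg23 k A R * leg12 k A R) := by rw [hpent]
  have lhs_eq : con1 φ ψ (leg13 k A R * leg23 k A R) = rCoefMap R φ * rCoefMap R ψ := by
    conv_rhs => rw [hR]
    rw [hR]
    simp only [map_sum, leg13_tmul, leg23_tmul, Finset.sum_mul, Finset.mul_sum,
      Algebra.TensorProduct.tmul_mul_tmul, one_mul, mul_one, con1_tmul, rCoefMap_sum,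
      smul_mul_assoc, mul_smul_comm, smul_smul, Finset.smul_sum]
    exact Finset.sum_congr rfl fun i _ => Finset.sum_congr rfl fun j _ => by rw [mul_comm]
  have rhs_mem : con1 φ ψ (leg12 k A (Ring.inverse R) * (leg23 k A R * leg12 k A R)) ∈
      rCoefs R := by
    set H := rCoefs R with hH
    rw [hRinv, hR]
    simp only [map_sum, leg12_tmul, leg13_tmul, leg23_tmul, Finset.sum_mul, Finset.mul_sum,
      Algebra.TensorProduct.tmul_mul_tmul, one_mul, mul_one, con1_tmul]
    exact Submodule.sum_mem _ fun j _ => Submodule.sum_mem _ fun i _ =>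
      Submodule.sum_mem _ fun l _ => Submodule.smul_mem _ _ (hg _)
  rw [← lhs_eq, key]
  exact rhs_mem


lemma lCoefs_mul_mem {R : A ⊗[k] A} (hinv : IsUnit R) (hpent : IsPentagon R)
    {a a' : A} (ha : a ∈ lCoefs R) (ha' : a' ∈ lCoefs R) : a * a' ∈ lCoefs R := by
  obtain ⟨φ, rfl⟩ := ha
  obtain ⟨ψ, rfl⟩ := ha'
  obtain ⟨n, f, g, hf, hg, hR⟩ := exists_good_expansion R
  obtain ⟨m, c, d, hRinv⟩ := exists_fin_expansion (Ring.inverse R)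
  have h1 : leg23 k A R * leg23 k A (Ring.inverse R) = 1 := by
    rw [← map_mul, Ring.mul_inverse_cancel R hinv, map_one]
  have key : leg12 k A R * leg13 k A R =
      leg23 k A R * leg12 k A R * leg23 k A (Ring.inverse R) := by
    calc leg12 k A R * leg13 k A R
        = leg12 k A R * leg13 k A R * (leg23 k A R * leg23 k A (Ring.inverse R)) := by
          rw [h1, mul_one]
      _ = leg12 k A R * leg13 k A R * leg23 k A R * leg23 k A (Ring.inverse R) := by
          simp only [mul_assoc]
      _ = leg23 k A R * leg12 k A R * leg23 k A (Ring.inverse R) := by rw [hpent]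
  have lhs_eq : con2 φ ψ (leg12 k A R * leg13 k A R) = lCoefMap R φ * lCoefMap R ψ := by
    conv_rhs => rw [hR]
    rw [hR]
    simp only [map_sum, leg12_tmul, leg13_tmul, Finset.sum_mul, Finset.mul_sum,
      Algebra.TensorProduct.tmul_mul_tmul, one_mul, mul_one, con2_tmul, lCoefMap_sum,
      smul_mul_assoc, mul_smul_comm, smul_smul, Finset.smul_sum]
    exact Finset.sum_congr rfl fun i _ => Finset.sum_congr rfl fun j _ => by rw [mul_comm]
  have rhs_mem : con2 φ ψ (leg23 k A R * leg12 k A R * leg23 k A (Ring.inverse R)) ∈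
      lCoefs R := by
    set P := lCoefs R with hP
    rw [hRinv, hR]
    simp only [map_sum, leg12_tmul, leg13_tmul, leg23_tmul, Finset.sum_mul, Finset.mul_sum,
      Algebra.TensorProduct.tmul_mul_tmul, one_mul, mul_one, con2_tmul]
    exact Submodule.sum_mem _ fun j _ => Submodule.sum_mem _ fun i _ =>
      Submodule.sum_mem _ fun l _ => Submodule.smul_mem _ _ (hf _)
  rw [← lhs_eq, key]
  exact rhs_mem

lemma lCoefs_mul_rCoefs_mem {R : A ⊗[k] A} (hpent : IsPentagon R)
    {a b : A} (ha : a ∈ lCoefs R) (hb : b ∈ rCoefs R) :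
    a * b ∈ Submodule.span k {x : A | ∃ b' ∈ rCoefs R, ∃ a' ∈ lCoefs R, x = b' * a'} := by
  obtain ⟨ψ, rfl⟩ := ha
  obtain ⟨φ, rfl⟩ := hb
  obtain ⟨n, f, g, hf, hg, hR⟩ := exists_good_expansion R
  have rhs_eq : con3 φ ψ (leg23 k A R * leg12 k A R) = lCoefMap R ψ * rCoefMap R φ := by
    conv_rhs => rw [hR]
    rw [hR]
    simp only [map_sum, leg12_tmul, leg23_tmul, Finset.sum_mul, Finset.mul_sum,
      Algebra.TensorProduct.tmul_mul_tmul, one_mul, mul_one, con3_tmul, lCoefMap_sum,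
      rCoefMap_sum, smul_mul_assoc, mul_smul_comm, smul_smul, Finset.smul_sum]
  have lhs_mem : con3 φ ψ (leg12 k A R * leg13 k A R * leg23 k A R) ∈
      Submodule.span k {x : A | ∃ b' ∈ rCoefs R, ∃ a' ∈ lCoefs R, x = b' * a'} := by
    set M := Submodule.span k {x : A | ∃ b' ∈ rCoefs R, ∃ a' ∈ lCoefs R, x = b' * a'} with hM
    rw [hR]
    simp only [map_sum, leg12_tmul, leg13_tmul, leg23_tmul, Finset.sum_mul, Finset.mul_sum,
      Algebra.TensorProduct.tmul_mul_tmul, one_mul, mul_one, con3_tmul]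
    refine Submodule.sum_mem _ fun i _ => Submodule.sum_mem _ fun j _ =>
      Submodule.sum_mem _ fun l _ => Submodule.smul_mem _ _ ?_
    exact Submodule.subset_span ⟨g _, hg _, f _, hf _, rfl⟩
  rw [← rhs_eq, ← hpent]
  exact lhs_mem

end Key

open Pointwise

/-- **Statement 5.** For a unitary invertible solution `R` of the pentagon equation, the
subalgebra `A_R` of `A` generated by `P = R_(l)` and `H = R_(r)` is spanned by the products
`{b * a : b ∈ H, a ∈ P}`; in particular it is finite-dimensional of dimension at most
`l(R)²`. -/
theorem subalgebra_generated_by_coefficients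
    {k : Type u} [Field k] {A : Type v} [Ring A] [Algebra k A]
    (R : A ⊗[k] A) (hinv : IsUnit R) (hpent : IsPentagon R) (huni : IsUnitary R) :
    Subalgebra.toSubmodule
        (Algebra.adjoin k ((lCoefs R : Set A) ∪ (rCoefs R : Set A))) =
      Submodule.span k {x : A | ∃ b ∈ rCoefs R, ∃ a ∈ lCoefs R, x = b * a} ∧
    FiniteDimensional k
      ↥(Algebra.adjoin k ((lCoefs R : Set A) ∪ (rCoefs R : Set A))) ∧
    Module.finrank k
        ↥(Algebra.adjoin k ((lCoefs R : Set A) ∪ (rCoefs R : Set A))) ≤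
      length R ^ 2 := by
  classical
  obtain ⟨h1P, h1H⟩ := huni
  set M := Submodule.span k {x : A | ∃ b ∈ rCoefs R, ∃ a ∈ lCoefs R, x = b * a} with hM
  -- sandwich lemma
  have aux : ∀ x ∈ M, ∀ b ∈ rCoefs R, ∀ a ∈ lCoefs R, b * x * a ∈ M := by
    intro x hx
    refine Submodule.span_induction ?_ ?_ ?_ ?_ hx
    · rintro _ ⟨b', hb', a', ha', rfl⟩ b hb a ha
      have : b * (b' * a') * a = (b * b') * (a' * a) := by
        rw [mul_assoc, mul_assoc, mul_assoc]
      rw [this]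
      exact Submodule.subset_span
        ⟨b * b', rCoefs_mul_mem hinv hpent hb hb', a' * a,
          lCoefs_mul_mem hinv hpent ha' ha, rfl⟩
    · intro b _ a _; simpa using M.zero_mem
    · intro x y _ _ ihx ihy b hb a ha
      have : b * (x + y) * a = b * x * a + b * y * a := by noncomm_ring
      rw [this]; exact M.add_mem (ihx b hb a ha) (ihy b hb a ha)
    · intro c x _ ihx b hb a ha
      have : b * (c • x) * a = c • (b * x * a) := by
        rw [mul_smul_comm, smul_mul_assoc]
      rw [this]; exact M.smul_mem _ (ihx b hb a ha)
  have mul_closed : ∀ x ∈ M, ∀ y ∈ M, x * y ∈ M := by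
    intro x hx
    refine Submodule.span_induction ?_ ?_ ?_ ?_ hx
    · rintro _ ⟨b, hb, a, ha, rfl⟩ y hy
      refine Submodule.span_induction ?_ ?_ ?_ ?_ hy
      · rintro _ ⟨b', hb', a', ha', rfl⟩
        have h3 : a * b' ∈ M := lCoefs_mul_rCoefs_mem hpent ha hb'
        have : (b * a) * (b' * a') = b * (a * b') * a' := by noncomm_ring
        rw [this]
        exact aux _ h3 b hb a' ha'
      · simpa using M.zero_mem
      · intro y z _ _ ihy ihz
        rw [mul_add]; exact M.add_mem ihy ihz
      · intro c y _ ihy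
        rw [mul_smul_comm]; exact M.smul_mem _ ihy
    · intro y _; simpa using M.zero_mem
    · intro x y _ _ ihx ihy z hz
      rw [add_mul]; exact M.add_mem (ihx z hz) (ihy z hz)
    · intro c x _ ihx z hz
      rw [smul_mul_assoc]; exact M.smul_mem _ (ihx z hz)
  have one_mem_M : (1 : A) ∈ M := by
    rw [hM]
    exact Submodule.subset_span ⟨1, h1H, 1, h1P, (one_mul 1).symm⟩
  -- the subalgebra with carrier M
  let S : Subalgebra k A :=
    { carrier := (M : Set A)
      mul_mem' := fun hx hy => mul_closed _ hx _ hy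
      one_mem' := one_mem_M
      add_mem' := fun hx hy => M.add_mem hx hy
      zero_mem' := M.zero_mem
      algebraMap_mem' := fun c => by
        simp only [Set.mem_setOf_eq, SetLike.mem_coe, Algebra.algebraMap_eq_smul_one]
        exact M.smul_mem _ one_mem_M }
  have hadj_le : Algebra.adjoin k ((lCoefs R : Set A) ∪ (rCoefs R : Set A)) ≤ S := by
    apply Algebra.adjoin_le
    rintro x (hx | hx)
    · show x ∈ M
      exact Submodule.subset_span (⟨1, h1H, x, hx, (one_mul x).symm⟩ :
        x ∈ {z : A | ∃ b ∈ rCoefs R, ∃ a ∈ lCoefs R, z = b * a})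
    · show x ∈ M
      exact Submodule.subset_span (⟨x, hx, 1, h1P, (mul_one x).symm⟩ :
        x ∈ {z : A | ∃ b ∈ rCoefs R, ∃ a ∈ lCoefs R, z = b * a})
  have hle_adj : M ≤ Subalgebra.toSubmodule
      (Algebra.adjoin k ((lCoefs R : Set A) ∪ (rCoefs R : Set A))) := by
    rw [hM]
    refine Submodule.span_le.mpr ?_
    rintro _ ⟨b, hb, a, ha, rfl⟩
    rw [SetLike.mem_coe, Subalgebra.mem_toSubmodule]
    exact mul_mem (Algebra.subset_adjoin (Or.inr hb)) (Algebra.subset_adjoin (Or.inl ha))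
  have hEq : Subalgebra.toSubmodule
      (Algebra.adjoin k ((lCoefs R : Set A) ∪ (rCoefs R : Set A))) = M := by
    refine le_antisymm ?_ hle_adj
    intro x hx
    exact hadj_le hx
  -- dimension bound
  have hne : {m : ℕ | ∃ a b : Fin m → A, R = ∑ i, a i ⊗ₜ[k] b i}.Nonempty := by
    obtain ⟨n, x, y, h⟩ := exists_fin_expansion R
    exact ⟨n, x, y, h⟩
  have hlen : ∃ x y : Fin (length R) → A, R = ∑ i, x i ⊗ₜ[k] y i := Nat.sInf_mem hne
  obtain ⟨x, y, hxy⟩ := hlen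
  have hPle : lCoefs R ≤ Submodule.span k (Set.range x) := by
    rintro _ ⟨φ, rfl⟩
    have h := lCoefMap_sum x y φ
    rw [← hxy] at h
    rw [h]
    exact Submodule.sum_mem _ fun i _ =>
      Submodule.smul_mem _ _ (Submodule.subset_span (Set.mem_range_self i))
  have hHle : rCoefs R ≤ Submodule.span k (Set.range y) := by
    rintro _ ⟨φ, rfl⟩
    have h := rCoefMap_sum x y φ
    rw [← hxy] at h
    rw [h]
    exact Submodule.sum_mem _ fun i _ =>
      Submodule.smul_mem _ _ (Submodule.subset_span (Set.mem_range_self i))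
  set T := Submodule.span k (Set.range fun p : Fin (length R) × Fin (length R) =>
    y p.1 * x p.2) with hT
  have hMT : M ≤ T := by
    rw [hM]
    apply Submodule.span_le.mpr
    rintro _ ⟨b, hb, a, ha, rfl⟩
    have : b * a ∈ Submodule.span k (Set.range y) * Submodule.span k (Set.range x) :=
      Submodule.mul_mem_mul (hHle hb) (hPle ha)
    rw [Submodule.span_mul_span] at this
    refine Submodule.span_mono ?_ this
    rintro _ ⟨u, hu, v, hv, rfl⟩
    obtain ⟨i, rfl⟩ := hu
    obtain ⟨j, rfl⟩ := hv
    exact ⟨(i, j), rfl⟩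
  have hTfin : FiniteDimensional k T :=
    FiniteDimensional.span_of_finite k (Set.finite_range _)
  have hMfin : FiniteDimensional k M := Submodule.finiteDimensional_of_le hMT
  have hTrank : Module.finrank k T ≤ length R ^ 2 := by
    have h1 := finrank_span_le_card (R := k)
      (Set.range fun p : Fin (length R) × Fin (length R) => y p.1 * x p.2)
    refine le_trans h1 ?_
    rw [Set.toFinset_card]
    calc Fintype.card ↑(Set.range fun p : Fin (length R) × Fin (length R) => y p.1 * x p.2)
        ≤ Fintype.card (Fin (length R) × Fin (length R)) := Fintype.card_range_le _
      _ = length R ^ 2 := by simp [sq]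
  have hMrank : Module.finrank k M ≤ length R ^ 2 :=
    le_trans (Submodule.finrank_mono hMT) hTrank
  refine ⟨hEq, ?_, ?_⟩
  · have : FiniteDimensional k ↥(Subalgebra.toSubmodule
        (Algebra.adjoin k ((lCoefs R : Set A) ∪ (rCoefs R : Set A)))) := by
      rw [hEq]; exact hMfin
    exact this
  · have : Module.finrank k ↥(Subalgebra.toSubmodule
        (Algebra.adjoin k ((lCoefs R : Set A) ∪ (rCoefs R : Set A)))) ≤ length R ^ 2 := by
      rw [hEq]; exact hMrank
    exact this

end PentagonPaper
end

section
/- Let k be a field and A a finite-dimensional k-algebra. Then every invertible solution R ∈ A⊗A of the pentagon equation is unitary, i.e. 1_A belongs to both coefficient spaces R_(l) and R_(r). -/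
open TensorProduct

set_option maxHeartbeats 1000000
set_option synthInstance.maxHeartbeats 200000

namespace PentagonPaper

section Aux

variable {k : Type*} [Field k] {A : Type*} [Ring A] [Algebra k A]

/-- The functional `x ⊗ y ↦ φ(x) ψ(y)` on `A ⊗ A`. -/
noncomputable def dpair (φ ψ : Module.Dual k A) : A ⊗[k] A →ₗ[k] k :=
  (TensorProduct.lid k k).toLinearMap ∘ₗ TensorProduct.map φ ψ

@[simp] lemma dpair_tmul (φ ψ : Module.Dual k A) (x y : A) :
    dpair φ ψ (x ⊗ₜ[k] y) = φ x * ψ y := by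
  simp [dpair, smul_eq_mul]

/-- `x ⊗ y ↦ φ(x) • y`. -/
noncomputable def apR (φ : Module.Dual k A) : A ⊗[k] A →ₗ[k] A :=
  (TensorProduct.lid k A).toLinearMap ∘ₗ LinearMap.rTensor A φ

@[simp] lemma apR_tmul (φ : Module.Dual k A) (x y : A) :
    apR φ (x ⊗ₜ[k] y) = φ x • y := by
  simp [apR]

/-- `x ⊗ y ↦ ψ(y) • x`. -/
noncomputable def apL (ψ : Module.Dual k A) : A ⊗[k] A →ₗ[k] A :=
  (TensorProduct.rid k A).toLinearMap ∘ₗ LinearMap.lTensor A ψ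

@[simp] lemma apL_tmul (ψ : Module.Dual k A) (x y : A) :
    apL ψ (x ⊗ₜ[k] y) = ψ y • x := by
  simp [apL]

lemma lCoefMap_eq (X : A ⊗[k] A) (φ : Module.Dual k A) :
    lCoefMap X φ = apL φ X := rfl

lemma rCoefMap_eq (X : A ⊗[k] A) (φ : Module.Dual k A) :
    rCoefMap X φ = apR φ X := rfl

@[simp] lemma lCoefMap_tmul (x y : A) (φ : Module.Dual k A) :
    lCoefMap (x ⊗ₜ[k] y) φ = φ y • x := by
  rw [lCoefMap_eq, apL_tmul]

@[simp] lemma rCoefMap_tmul (x y : A) (φ : Module.Dual k A) :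
    rCoefMap (x ⊗ₜ[k] y) φ = φ x • y := by
  rw [rCoefMap_eq, apR_tmul]

@[simp] lemma lCoefMap_zero (φ : Module.Dual k A) :
    lCoefMap (0 : A ⊗[k] A) φ = 0 := by
  rw [lCoefMap_eq]; simp

@[simp] lemma rCoefMap_zero (φ : Module.Dual k A) :
    rCoefMap (0 : A ⊗[k] A) φ = 0 := by
  rw [rCoefMap_eq]; simp

@[simp] lemma lCoefMap_add (X Y : A ⊗[k] A) (φ : Module.Dual k A) :
    lCoefMap (X + Y) φ = lCoefMap X φ + lCoefMap Y φ := by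
  simp only [lCoefMap_eq, map_add]

@[simp] lemma rCoefMap_add (X Y : A ⊗[k] A) (φ : Module.Dual k A) :
    rCoefMap (X + Y) φ = rCoefMap X φ + rCoefMap Y φ := by
  simp only [rCoefMap_eq, map_add]

lemma lCoefMap_sum_s9 {ι : Type*} (s : Finset ι) (f : ι → A ⊗[k] A) (φ : Module.Dual k A) :
    lCoefMap (∑ i ∈ s, f i) φ = ∑ i ∈ s, lCoefMap (f i) φ := by
  simp only [lCoefMap_eq, map_sum]

lemma rCoefMap_sum_s9 {ι : Type*} (s : Finset ι) (f : ι → A ⊗[k] A) (φ : Module.Dual k A) :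
    rCoefMap (∑ i ∈ s, f i) φ = ∑ i ∈ s, rCoefMap (f i) φ := by
  simp only [rCoefMap_eq, map_sum]

/-- `x ⊗ (y ⊗ z) ↦ (φ y * ψ z) • x`. -/
noncomputable def Fl (φ ψ : Module.Dual k A) : A ⊗[k] (A ⊗[k] A) →ₗ[k] A :=
  (TensorProduct.rid k A).toLinearMap ∘ₗ LinearMap.lTensor A (dpair φ ψ)

@[simp] lemma Fl_tmul (φ ψ : Module.Dual k A) (x : A) (w : A ⊗[k] A) :
    Fl φ ψ (x ⊗ₜ[k] w) = dpair φ ψ w • x := by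
  simp [Fl]

/-- `x ⊗ (y ⊗ z) ↦ φ x • ψ y • z`. -/
noncomputable def Fr (φ ψ : Module.Dual k A) : A ⊗[k] (A ⊗[k] A) →ₗ[k] A :=
  apR φ ∘ₗ LinearMap.lTensor A (apR ψ)

@[simp] lemma Fr_tmul (φ ψ : Module.Dual k A) (x : A) (w : A ⊗[k] A) :
    Fr φ ψ (x ⊗ₜ[k] w) = φ x • apR ψ w := by
  simp [Fr]

/-- `a ↦ P * (a ⊗ 1) * T`. -/
noncomputable def mmL (P T : A ⊗[k] A) : A →ₗ[k] A ⊗[k] A :=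
  LinearMap.mulRight k T ∘ₗ LinearMap.mulLeft k P ∘ₗ
    (Algebra.TensorProduct.includeLeft : A →ₐ[k] A ⊗[k] A).toLinearMap

@[simp] lemma mmL_apply (P T : A ⊗[k] A) (a : A) :
    mmL P T a = P * (a ⊗ₜ[k] (1 : A)) * T := by
  simp [mmL]

/-- `a ↦ P * (1 ⊗ a) * T`. -/
noncomputable def mmR (P T : A ⊗[k] A) : A →ₗ[k] A ⊗[k] A :=
  LinearMap.mulRight k T ∘ₗ LinearMap.mulLeft k P ∘ₗ
    (Algebra.TensorProduct.includeRight : A →ₐ[k] A ⊗[k] A).toLinearMap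

@[simp] lemma mmR_apply (P T : A ⊗[k] A) (a : A) :
    mmR P T a = P * ((1 : A) ⊗ₜ[k] a) * T := by
  simp [mmR]

lemma lemA_l (φ ψ : Module.Dual k A) (S T : A ⊗[k] A) :
    Fl φ ψ (leg12 k A S * leg13 k A T) = lCoefMap S φ * lCoefMap T ψ := by
  induction S using TensorProduct.induction_on with
  | zero => simp [leg12]
  | add S₁ S₂ h₁ h₂ => simp only [map_add, add_mul, h₁, h₂, lCoefMap_add]
  | tmul x y =>
    induction T using TensorProduct.induction_on with
    | zero => simp [leg13]
    | add T₁ T₂ h₁ h₂ => simp only [map_add, mul_add, h₁, h₂, lCoefMap_add]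
    | tmul z w =>
      simp only [leg12, leg13, Algebra.TensorProduct.map_tmul, AlgHom.coe_id, id_eq,
        Algebra.TensorProduct.includeLeft_apply, Algebra.TensorProduct.includeRight_apply,
        Algebra.TensorProduct.tmul_mul_tmul, one_mul, mul_one, Fl_tmul, dpair_tmul,
        lCoefMap_tmul, smul_mul_assoc, mul_smul_comm, mul_smul]
      rw [smul_comm]

lemma lemA_r (φ ψ : Module.Dual k A) (S T : A ⊗[k] A) :
    Fr φ ψ (leg13 k A S * leg23 k A T) = rCoefMap S φ * rCoefMap T ψ := by
  induction S using TensorProduct.induction_on with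
  | zero => simp [leg13]
  | add S₁ S₂ h₁ h₂ => simp only [map_add, add_mul, h₁, h₂, rCoefMap_add]
  | tmul x y =>
    have hT : apR ψ (((1 : A) ⊗ₜ[k] y) * T) = y * rCoefMap T ψ := by
      induction T using TensorProduct.induction_on with
      | zero => simp
      | add T₁ T₂ h₁ h₂ => simp only [mul_add, map_add, h₁, h₂, rCoefMap_add]
      | tmul z w =>
        simp [Algebra.TensorProduct.tmul_mul_tmul, mul_smul_comm]
    simp only [leg13, leg23, Algebra.TensorProduct.map_tmul, AlgHom.coe_id, id_eq,
      Algebra.TensorProduct.includeRight_apply, Algebra.TensorProduct.tmul_mul_tmul,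
      mul_one, one_mul, Fr_tmul, hT, rCoefMap_tmul, smul_mul_assoc]

lemma lemB_l (φ ψ : Module.Dual k A) (P S T : A ⊗[k] A) :
    Fl φ ψ (leg23 k A P * leg12 k A S * leg23 k A T) =
      lCoefMap S (dpair φ ψ ∘ₗ mmL P T) := by
  induction S using TensorProduct.induction_on with
  | zero => simp [leg12]
  | add S₁ S₂ h₁ h₂ => simp only [map_add, add_mul, mul_add, h₁, h₂, lCoefMap_add]
  | tmul x y =>
    simp only [leg12, leg23, Algebra.TensorProduct.map_tmul, AlgHom.coe_id, id_eq,
      Algebra.TensorProduct.includeLeft_apply, Algebra.TensorProduct.includeRight_apply,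
      Algebra.TensorProduct.tmul_mul_tmul, one_mul, mul_one, Fl_tmul,
      lCoefMap_tmul, LinearMap.coe_comp, Function.comp_apply, mmL_apply]

lemma lemB_r (φ ψ : Module.Dual k A) (P S T : A ⊗[k] A) :
    Fr φ ψ (leg12 k A P * leg23 k A S * leg12 k A T) =
      rCoefMap S (dpair φ ψ ∘ₗ mmR P T) := by
  induction S using TensorProduct.induction_on with
  | zero => simp only [map_zero, mul_zero, zero_mul, rCoefMap_zero]
  | add S₁ S₂ h₁ h₂ => simp only [map_add, mul_add, add_mul, rCoefMap_add, h₁, h₂]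
  | tmul x y =>
    simp only [LinearMap.coe_comp, Function.comp_apply, mmR_apply, rCoefMap_tmul]
    induction P using TensorProduct.induction_on with
    | zero => simp only [map_zero, zero_mul, zero_smul]
    | add P₁ P₂ h₁ h₂ => simp only [map_add, add_mul, add_smul, h₁, h₂]
    | tmul p₁ p₂ =>
      induction T using TensorProduct.induction_on with
      | zero => simp only [map_zero, mul_zero, zero_smul]
      | add T₁ T₂ h₁ h₂ => simp only [map_add, mul_add, add_smul, h₁, h₂]
      | tmul t₁ t₂ =>
        simp only [leg12, leg23, Algebra.TensorProduct.map_tmul, AlgHom.coe_id, id_eq,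
          Algebra.TensorProduct.includeLeft_apply, Algebra.TensorProduct.includeRight_apply,
          Algebra.TensorProduct.tmul_mul_tmul, one_mul, mul_one, Fr_tmul, apR_tmul,
          dpair_tmul, mul_smul]

lemma expand_l {ι : Type*} [Fintype ι] (b : Module.Basis ι k A) (X : A ⊗[k] A) :
    X = ∑ i, lCoefMap X (b.coord i) ⊗ₜ[k] b i := by
  induction X using TensorProduct.induction_on with
  | zero => simp
  | add X Y hX hY =>
    simp only [lCoefMap_add, TensorProduct.add_tmul, Finset.sum_add_distrib]
    rw [← hX, ← hY]
  | tmul x y =>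
    simp only [lCoefMap_tmul]
    have h : ∀ i : ι, (b.coord i y • x) ⊗ₜ[k] b i = x ⊗ₜ[k] (b.repr y i • b i) := fun i => by
      rw [TensorProduct.smul_tmul, Module.Basis.coord_apply]
    rw [Finset.sum_congr rfl fun i _ => h i, ← TensorProduct.tmul_sum, Module.Basis.sum_repr]

lemma expand_r {ι : Type*} [Fintype ι] (b : Module.Basis ι k A) (X : A ⊗[k] A) :
    X = ∑ i, b i ⊗ₜ[k] rCoefMap X (b.coord i) := by
  induction X using TensorProduct.induction_on with
  | zero => simp
  | add X Y hX hY =>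
    simp only [rCoefMap_add, TensorProduct.tmul_add, Finset.sum_add_distrib]
    rw [← hX, ← hY]
  | tmul x y =>
    simp only [rCoefMap_tmul]
    have h : ∀ i : ι, b i ⊗ₜ[k] (b.coord i x • y) = (b.repr x i • b i) ⊗ₜ[k] y := fun i => by
      rw [← TensorProduct.smul_tmul, Module.Basis.coord_apply]
    rw [Finset.sum_congr rfl fun i _ => h i, ← TensorProduct.sum_tmul, Module.Basis.sum_repr]

lemma coef_mul_mem_l [FiniteDimensional k A] (X Y : A ⊗[k] A) (φ : Module.Dual k A) :
    lCoefMap (X * Y) φ ∈ lCoefs X * lCoefs Y := by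
  classical
  set b := Module.finBasis k A with hb
  have e : X * Y = ∑ i, ∑ j,
      (lCoefMap X (b.coord i) * lCoefMap Y (b.coord j)) ⊗ₜ[k] (b i * b j) := by
    conv_lhs => rw [expand_l b X, expand_l b Y]
    rw [Finset.sum_mul_sum]
    simp only [Algebra.TensorProduct.tmul_mul_tmul]
  rw [e]
  rw [lCoefMap_sum_s9]
  refine Submodule.sum_mem _ fun i _ => ?_
  rw [lCoefMap_sum_s9]
  refine Submodule.sum_mem _ fun j _ => ?_
  rw [lCoefMap_tmul]
  exact Submodule.smul_mem _ _ (Submodule.mul_mem_mul ⟨_, rfl⟩ ⟨_, rfl⟩)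

lemma coef_mul_mem_r [FiniteDimensional k A] (X Y : A ⊗[k] A) (φ : Module.Dual k A) :
    rCoefMap (X * Y) φ ∈ rCoefs X * rCoefs Y := by
  classical
  set b := Module.finBasis k A with hb
  have e : X * Y = ∑ i, ∑ j,
      (b i * b j) ⊗ₜ[k] (rCoefMap X (b.coord i) * rCoefMap Y (b.coord j)) := by
    conv_lhs => rw [expand_r b X, expand_r b Y]
    rw [Finset.sum_mul_sum]
    simp only [Algebra.TensorProduct.tmul_mul_tmul]
  rw [e]
  rw [rCoefMap_sum_s9]
  refine Submodule.sum_mem _ fun i _ => ?_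
  rw [rCoefMap_sum_s9]
  refine Submodule.sum_mem _ fun j _ => ?_
  rw [rCoefMap_tmul]
  exact Submodule.smul_mem _ _ (Submodule.mul_mem_mul ⟨_, rfl⟩ ⟨_, rfl⟩)

lemma inv_mem_subalgebra {B : Type*} [Ring B] [Algebra k B] [FiniteDimensional k B]
    (S : Subalgebra k B) (u : Bˣ) (hu : (u : B) ∈ S) : ((u⁻¹ : Bˣ) : B) ∈ S := by
  haveI : FiniteDimensional k S := inferInstance
  set f : S →ₗ[k] S := LinearMap.mulLeft k (⟨(u : B), hu⟩ : S) with hf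
  have hinj : Function.Injective f := by
    intro x y hxy
    have h2 : (u : B) * (x : B) = (u : B) * (y : B) := by
      have := congrArg Subtype.val hxy
      simpa [hf, LinearMap.mulLeft_apply] using this
    exact Subtype.ext ((Units.mul_right_inj u).mp h2)
  obtain ⟨y, hy⟩ := (LinearMap.injective_iff_surjective).mp hinj 1
  have h3 : (u : B) * (y : B) = 1 := by
    have := congrArg Subtype.val hy
    simpa [hf, LinearMap.mulLeft_apply] using this
  have h4 : ((u⁻¹ : Bˣ) : B) = (y : B) := by
    calc ((u⁻¹ : Bˣ) : B) = (u⁻¹ : Bˣ) * ((u : B) * (y : B)) := by rw [h3, mul_one]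
      _ = (y : B) := by rw [← mul_assoc, Units.inv_mul, one_mul]
  rw [h4]
  exact y.2

lemma lCoefMap_range_mem (S : Subalgebra k A) (z : S ⊗[k] A) (φ : Module.Dual k A) :
    lCoefMap ((Algebra.TensorProduct.map S.val (AlgHom.id k A)) z) φ ∈
      Subalgebra.toSubmodule S := by
  induction z using TensorProduct.induction_on with
  | zero => simp
  | add z₁ z₂ h₁ h₂ => rw [map_add, lCoefMap_add]; exact add_mem h₁ h₂
  | tmul s a =>
    simp only [Algebra.TensorProduct.map_tmul, AlgHom.coe_id, id_eq, Subalgebra.coe_val,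
      lCoefMap_tmul]
    exact Submodule.smul_mem _ _ s.2

lemma rCoefMap_range_mem (S : Subalgebra k A) (z : A ⊗[k] S) (φ : Module.Dual k A) :
    rCoefMap ((Algebra.TensorProduct.map (AlgHom.id k A) S.val) z) φ ∈
      Subalgebra.toSubmodule S := by
  induction z using TensorProduct.induction_on with
  | zero => simp
  | add z₁ z₂ h₁ h₂ => rw [map_add, rCoefMap_add]; exact add_mem h₁ h₂
  | tmul a s =>
    simp only [Algebra.TensorProduct.map_tmul, AlgHom.coe_id, id_eq, Subalgebra.coe_val,
      rCoefMap_tmul]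
    exact Submodule.smul_mem _ _ s.2

end Aux

section Main

variable {k : Type*} [Field k] {A : Type*} [Ring A] [Algebra k A]

lemma one_mem_lCoefs [FiniteDimensional k A]
    (R : A ⊗[k] A) (hinv : IsUnit R) (hpent : IsPentagon R) : (1 : A) ∈ lCoefs R := by
  classical
  rcases subsingleton_or_nontrivial A with hs | hn
  · have : (1 : A) = 0 := Subsingleton.elim _ _
    rw [this]; exact zero_mem _
  obtain ⟨u, hu⟩ := hinv
  set Q : A ⊗[k] A := ((u⁻¹ : (A ⊗[k] A)ˣ) : A ⊗[k] A) with hQdef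
  have hRQ : R * Q = 1 := by rw [hQdef, ← hu, Units.mul_inv]
  have hp : leg12 k A R * leg13 k A R * leg23 k A R = leg23 k A R * leg12 k A R := hpent
  have eq_a : leg12 k A R * leg13 k A R = leg23 k A R * leg12 k A R * leg23 k A Q := by
    calc leg12 k A R * leg13 k A R
        = leg12 k A R * leg13 k A R * (leg23 k A R * leg23 k A Q) := by
          rw [← map_mul, hRQ, map_one, mul_one]
      _ = leg12 k A R * leg13 k A R * leg23 k A R * leg23 k A Q := by
          rw [mul_assoc (leg12 k A R * leg13 k A R)]
      _ = leg23 k A R * leg12 k A R * leg23 k A Q := by rw [hp]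
  have hclosed : ∀ x ∈ lCoefs R, ∀ y ∈ lCoefs R, x * y ∈ lCoefs R := by
    rintro _ ⟨φ, rfl⟩ _ ⟨ψ, rfl⟩
    rw [← lemA_l φ ψ R R, eq_a, lemB_l φ ψ R R Q]
    exact ⟨_, rfl⟩
  set L' : Submodule k A := 1 ⊔ lCoefs R with hL'
  have h1L : (1 : A) ∈ L' :=
    Submodule.mem_sup_left (Submodule.mem_one.mpr ⟨1, map_one _⟩)
  have hLle : lCoefs R ≤ L' := le_sup_right
  have hmulL : L' * L' ≤ L' := by
    rw [hL', Submodule.sup_mul, Submodule.one_mul, Submodule.mul_sup, Submodule.mul_one]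
    exact sup_le le_rfl
      (sup_le le_sup_right (le_trans (Submodule.mul_le.mpr hclosed) le_sup_right))
  set L'' : Subalgebra k A :=
    L'.toSubalgebra h1L (fun x y hx hy => hmulL (Submodule.mul_mem_mul hx hy)) with hL''
  set W : Subalgebra k (A ⊗[k] A) :=
    (Algebra.TensorProduct.map L''.val (AlgHom.id k A)).range with hW
  set b := Module.finBasis k A with hb
  have hRW : R ∈ W := by
    rw [expand_l b R]
    refine Subalgebra.sum_mem _ fun i _ => ?_
    refine (AlgHom.mem_range _).mpr
      ⟨(⟨lCoefMap R (b.coord i), hLle ⟨_, rfl⟩⟩ : L'') ⊗ₜ[k] b i, ?_⟩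
    simp only [Algebra.TensorProduct.map_tmul, AlgHom.coe_id, id_eq, Subalgebra.coe_val]
  have hQW : Q ∈ W := by
    refine inv_mem_subalgebra W u ?_
    rw [hu]; exact hRW
  have hQcoefs : lCoefs Q ≤ L' := by
    rintro _ ⟨φ, rfl⟩
    obtain ⟨z, hz⟩ := (AlgHom.mem_range _).mp hQW
    rw [← hz]
    exact lCoefMap_range_mem L'' z φ
  obtain ⟨φ₀, hφ₀⟩ : ∃ φ : Module.Dual k A, φ 1 = 1 := by
    have h1 : ¬ (∀ φ : Module.Dual k A, φ (1 : A) = 0) := fun h =>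
      one_ne_zero ((Module.forall_dual_apply_eq_zero_iff k (1 : A)).mp h)
    push_neg at h1
    obtain ⟨φ, hφ⟩ := h1
    exact ⟨(φ 1)⁻¹ • φ, by simp [inv_mul_cancel₀ hφ]⟩
  have key : (1 : A) = lCoefMap (R * Q) φ₀ := by
    rw [hRQ, Algebra.TensorProduct.one_def, lCoefMap_tmul, hφ₀, one_smul]
  have hmem : lCoefMap (R * Q) φ₀ ∈ lCoefs R * lCoefs Q := coef_mul_mem_l R Q φ₀
  have hle : lCoefs R * lCoefs Q ≤ lCoefs R := by
    refine le_trans (mul_le_mul' le_rfl hQcoefs) ?_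
    rw [hL', Submodule.mul_sup, Submodule.mul_one]
    exact sup_le le_rfl (Submodule.mul_le.mpr hclosed)
  rw [key]
  exact hle hmem

lemma one_mem_rCoefs [FiniteDimensional k A]
    (R : A ⊗[k] A) (hinv : IsUnit R) (hpent : IsPentagon R) : (1 : A) ∈ rCoefs R := by
  classical
  rcases subsingleton_or_nontrivial A with hs | hn
  · have : (1 : A) = 0 := Subsingleton.elim _ _
    rw [this]; exact zero_mem _
  obtain ⟨u, hu⟩ := hinv
  set Q : A ⊗[k] A := ((u⁻¹ : (A ⊗[k] A)ˣ) : A ⊗[k] A) with hQdef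
  have hRQ : R * Q = 1 := by rw [hQdef, ← hu, Units.mul_inv]
  have hQR : Q * R = 1 := by rw [hQdef, ← hu, Units.inv_mul]
  have hp : leg12 k A R * leg13 k A R * leg23 k A R = leg23 k A R * leg12 k A R := hpent
  have eq_b : leg13 k A R * leg23 k A R = leg12 k A Q * leg23 k A R * leg12 k A R := by
    calc leg13 k A R * leg23 k A R
        = leg12 k A Q * leg12 k A R * (leg13 k A R * leg23 k A R) := by
          rw [← map_mul, hQR, map_one, one_mul]
      _ = leg12 k A Q * (leg12 k A R * leg13 k A R * leg23 k A R) := by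
          rw [mul_assoc, mul_assoc]
      _ = leg12 k A Q * (leg23 k A R * leg12 k A R) := by rw [hp]
      _ = leg12 k A Q * leg23 k A R * leg12 k A R := by rw [mul_assoc]
  have hclosed : ∀ x ∈ rCoefs R, ∀ y ∈ rCoefs R, x * y ∈ rCoefs R := by
    rintro _ ⟨φ, rfl⟩ _ ⟨ψ, rfl⟩
    rw [← lemA_r φ ψ R R, eq_b, lemB_r φ ψ Q R R]
    exact ⟨_, rfl⟩
  set L' : Submodule k A := 1 ⊔ rCoefs R with hL'
  have h1L : (1 : A) ∈ L' :=
    Submodule.mem_sup_left (Submodule.mem_one.mpr ⟨1, map_one _⟩)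
  have hLle : rCoefs R ≤ L' := le_sup_right
  have hmulL : L' * L' ≤ L' := by
    rw [hL', Submodule.sup_mul, Submodule.one_mul, Submodule.mul_sup, Submodule.mul_one]
    exact sup_le le_rfl
      (sup_le le_sup_right (le_trans (Submodule.mul_le.mpr hclosed) le_sup_right))
  set L'' : Subalgebra k A :=
    L'.toSubalgebra h1L (fun x y hx hy => hmulL (Submodule.mul_mem_mul hx hy)) with hL''
  set W : Subalgebra k (A ⊗[k] A) :=
    (Algebra.TensorProduct.map (AlgHom.id k A) L''.val).range with hW
  set b := Module.finBasis k A with hb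
  have hRW : R ∈ W := by
    rw [expand_r b R]
    refine Subalgebra.sum_mem _ fun i _ => ?_
    refine (AlgHom.mem_range _).mpr
      ⟨b i ⊗ₜ[k] (⟨rCoefMap R (b.coord i), hLle ⟨_, rfl⟩⟩ : L''), ?_⟩
    simp only [Algebra.TensorProduct.map_tmul, AlgHom.coe_id, id_eq, Subalgebra.coe_val]
  have hQW : Q ∈ W := by
    refine inv_mem_subalgebra W u ?_
    rw [hu]; exact hRW
  have hQcoefs : rCoefs Q ≤ L' := by
    rintro _ ⟨φ, rfl⟩
    obtain ⟨z, hz⟩ := (AlgHom.mem_range _).mp hQW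
    rw [← hz]
    exact rCoefMap_range_mem L'' z φ
  obtain ⟨φ₀, hφ₀⟩ : ∃ φ : Module.Dual k A, φ 1 = 1 := by
    have h1 : ¬ (∀ φ : Module.Dual k A, φ (1 : A) = 0) := fun h =>
      one_ne_zero ((Module.forall_dual_apply_eq_zero_iff k (1 : A)).mp h)
    push_neg at h1
    obtain ⟨φ, hφ⟩ := h1
    exact ⟨(φ 1)⁻¹ • φ, by simp [inv_mul_cancel₀ hφ]⟩
  have key : (1 : A) = rCoefMap (R * Q) φ₀ := by
    rw [hRQ, Algebra.TensorProduct.one_def, rCoefMap_tmul, hφ₀, one_smul]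
  have hmem : rCoefMap (R * Q) φ₀ ∈ rCoefs R * rCoefs Q := coef_mul_mem_r R Q φ₀
  have hle : rCoefs R * rCoefs Q ≤ rCoefs R := by
    refine le_trans (mul_le_mul' le_rfl hQcoefs) ?_
    rw [hL', Submodule.mul_sup, Submodule.mul_one]
    exact sup_le le_rfl (Submodule.mul_le.mpr hclosed)
  rw [key]
  exact hle hmem

end Main

/-- **Statement 13.** Over a finite-dimensional algebra, every invertible solution of the
pentagon equation is unitary: `1_A` belongs to both coefficient spaces `R_(l)` and `R_(r)`. -/
theorem isUnitary_of_finiteDimensional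
    {k : Type u} [Field k] {A : Type v} [Ring A] [Algebra k A] [FiniteDimensional k A]
    (R : A ⊗[k] A) (hinv : IsUnit R) (hpent : IsPentagon R) :
    (1 : A) ∈ lCoefs R ∧ (1 : A) ∈ rCoefs R := by
  exact ⟨one_mem_lCoefs R hinv hpent, one_mem_rCoefs R hinv hpent⟩

end PentagonPaper
end
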